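/- Let Alg be a consistent scenario decision algorithm that is permutation invariant and stable with ρ(Alg) ≤ d. Then every tuple z = (z_1,...,z_N) ∈ Z^N with N ≥ d admits a compression set of cardinality exactly d; consequently, for every ε ∈ (0,1] and probability measure P, the set {z ∈ Z^N : V_P(Alg(z)) > ε} equals the union over all I ⊆ {1,...,N} with |I| = d of the sets {z ∈ Z^N : I is a compression set for z and V_P(Alg(z)) > ε}. -/

import Mathlib

open MeasureTheory

section Scenario

variable {X Z : Type*}

/-- The subtuple of the tuple `z` indexed by the elements of `I`,
taken in increasing order of the indices. -/
def subtuple {N : ℕ} (z : Fin N → Z) (I : Finset (Fin N)) : List Z :=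
  (I.sort (· ≤ ·)).map z

/-- `I` is a compression set for the tuple `z` with respect to the algorithm `Alg`:
`Alg` applied to the subtuple indexed by `I` returns the same decision as `Alg`
applied to the whole tuple. -/
def IsCompression (Alg : List Z → X) {N : ℕ} (z : Fin N → Z) (I : Finset (Fin N)) : Prop :=
  Alg (subtuple z I) = Alg (List.ofFn z)

/-- `Alg` is permutation invariant. -/
def PermInvariant (Alg : List Z → X) : Prop :=
  ∀ l l' : List Z, l.Perm l' → Alg l = Alg l'

/-- `Alg` is stable: if the decision made from a tuple satisfies an extra constraint,
then appending that constraint does not change the decision. -/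
def Stable (mem : X → Z → Prop) (Alg : List Z → X) : Prop :=
  ∀ (l : List Z) (w : Z), mem (Alg l) w → Alg (l ++ [w]) = Alg l

/-- `Alg` is consistent: the decision satisfies all sampled constraints. -/
def Consistent (mem : X → Z → Prop) (Alg : List Z → X) : Prop :=
  ∀ (l : List Z), ∀ w ∈ l, mem (Alg l) w

/-- The compression size of `Alg` is at most `d`: every finite tuple admits a
compression set of cardinality at most `d`. -/
def CompressionSizeLE (Alg : List Z → X) (d : ℕ) : Prop :=
  ∀ (N : ℕ) (z : Fin N → Z), ∃ I : Finset (Fin N), I.card ≤ d ∧ IsCompression Alg z I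

/-- The unique-compression assumption for `d`: every tuple of length at least `d`
has exactly one compression set of cardinality `d`. -/
def UniqueCompression (Alg : List Z → X) (d : ℕ) : Prop :=
  ∀ (N : ℕ), d ≤ N → ∀ z : Fin N → Z,
    ∃! I : Finset (Fin N), I.card = d ∧ IsCompression Alg z I

/-- The risk (violation probability) of the decision `x` w.r.t. `P`. -/
noncomputable def risk [MeasurableSpace Z] (mem : X → Z → Prop)
    (P : Measure Z) (x : X) : ℝ :=
  (P {w | ¬ mem x w}).toReal

/-- `σ` is a selection algorithm with discarding size `r`: it returns a subtuple
(subsequence) of its input that discards at most `r` constraints. -/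
def IsSelection (σ : List Z → List Z) (r : ℕ) : Prop :=
  ∀ l : List Z, (σ l).Sublist l ∧ l.length - r ≤ (σ l).length

end Scenario

/-- Every tuple of length `N ≥ d` admits a compression set of cardinality exactly
`d`; consequently the event of risk exceeding `ε` is the union, over index sets
`I` of cardinality `d`, of the events that `I` is a compression set and the risk
exceeds `ε`. -/

lemma compression_insert_aux {X Z : Type*} (mem : X → Z → Prop) (Alg : List Z → X)
    (hcons : Consistent mem Alg) (hperm : PermInvariant Alg) (hstab : Stable mem Alg)
    {N : ℕ} (z : Fin N → Z) (I : Finset (Fin N)) (j : Fin N)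
    (h : IsCompression Alg z I) : IsCompression Alg z (insert j I) := by
  by_cases hj : j ∈ I
  · rwa [Finset.insert_eq_self.2 hj]
  have hmem : mem (Alg (subtuple z I)) (z j) := by
    rw [h]
    exact hcons _ (z j) (by simp [List.mem_ofFn])
  have hperm1 : (subtuple z (insert j I)).Perm (subtuple z I ++ [z j]) := by
    have : ((insert j I).sort (· ≤ ·)).Perm (j :: I.sort (· ≤ ·)) :=
      (Finset.sort_perm_toList _ _).trans <| ((Finset.toList_insert hj)).trans
        ((Finset.sort_perm_toList _ _).symm.cons j)
    exact ((this.map z).trans (List.perm_append_singleton _ _).symm)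
  unfold IsCompression
  rw [hperm _ _ hperm1, hstab _ _ hmem, h]

lemma compression_mono_aux {X Z : Type*} (mem : X → Z → Prop) (Alg : List Z → X)
    (hcons : Consistent mem Alg) (hperm : PermInvariant Alg) (hstab : Stable mem Alg)
    {N : ℕ} (z : Fin N → Z) (I J : Finset (Fin N)) (hIJ : I ⊆ J)
    (h : IsCompression Alg z I) : IsCompression Alg z J := by
  have key : ∀ K : Finset (Fin N), IsCompression Alg z (I ∪ K) := by
    intro K
    induction K using Finset.induction_on with
    | empty => simpa using h
    | insert _ _ hn ih =>
        rw [Finset.union_insert]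
        exact compression_insert_aux mem Alg hcons hperm hstab z _ _ ih
  have := key J
  rwa [Finset.union_eq_right.2 hIJ] at this

theorem stmt12 {X Z : Type*} [MeasurableSpace Z]
    (mem : X → Z → Prop) (Alg : List Z → X)
    (hcons : Consistent mem Alg) (hperm : PermInvariant Alg) (hstab : Stable mem Alg)
    (d : ℕ) (hd : CompressionSizeLE Alg d)
    (N : ℕ) (hN : d ≤ N) :
    (∀ z : Fin N → Z, ∃ I : Finset (Fin N), I.card = d ∧ IsCompression Alg z I) ∧
    (∀ ε : ℝ, ε ∈ Set.Ioc (0 : ℝ) 1 → ∀ P : Measure Z, IsProbabilityMeasure P →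
      {z : Fin N → Z | ε < risk mem P (Alg (List.ofFn z))}
        = ⋃ I ∈ {I : Finset (Fin N) | I.card = d},
            {z : Fin N → Z |
              IsCompression Alg z I ∧ ε < risk mem P (Alg (List.ofFn z))}) := by
  have main : ∀ z : Fin N → Z, ∃ I : Finset (Fin N), I.card = d ∧ IsCompression Alg z I := by
    intro z
    obtain ⟨I, hIc, hI⟩ := hd N z
    obtain ⟨J, hIJ, hJc⟩ := Finset.exists_superset_card_eq hIc (by simpa using hN)
    exact ⟨J, hJc, compression_mono_aux mem Alg hcons hperm hstab z I J hIJ hI⟩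
  refine ⟨main, ?_⟩
  intro ε hε P hP
  ext z
  simp only [Set.mem_setOf_eq, Set.mem_iUnion]
  constructor
  · intro hz
    obtain ⟨I, hIc, hI⟩ := main z
    exact ⟨I, hIc, hI, hz⟩
  · rintro ⟨I, _, _, hz⟩
    exact hz
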